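/- Let k ≥ 1 be an integer, let u > 0, and let 0 ≤ ρ ≤ u. If X = (X₁, …, X_k) is a vector of k independent standard Gaussian random variables, then P( ‖X‖ ≥ u − ρ ) = P( ‖X‖ ≥ u ) + Σ_{j=1}^∞ (ρ^j / j!) · (-1)^{j-1} · p_k^{(j-1)}(u), where the series converges absolutely and p_k^{(j-1)} denotes the (j−1)-st derivative of p_k. -/

import Mathlib

open MeasureTheory Set ProbabilityTheory

/-- The density of the χ-distribution with `k` degrees of freedom, regarded as a smooth function
on all of `ℝ`: `p_k(x) = x^{k-1} e^{-x²/2} / (Γ(k/2) · 2^{(k-2)/2})`. -/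
noncomputable def chiDensity (k : ℕ) (x : ℝ) : ℝ :=
  x ^ (k - 1) * Real.exp (-x ^ 2 / 2) /
    (Real.Gamma ((k : ℝ) / 2) * (2 : ℝ) ^ (((k : ℝ) - 2) / 2))


private lemma lintegral_pi_prod : ∀ {n : ℕ} (f : Fin n → ℝ → ENNReal), (∀ i, Measurable (f i)) →
    ∫⁻ x : Fin n → ℝ, ∏ i, f i (x i) ∂(Measure.pi fun _ => (volume : Measure ℝ))
      = ∏ i, ∫⁻ y, f i y := by
  intro n
  induction n with
  | zero =>
    intro f hf
    simp [lintegral_const]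
  | succ n ih =>
    intro f hf
    have hmp := (measurePreserving_piFinSuccAbove (fun _ : Fin (n+1) => (volume : Measure ℝ)) 0).symm
    rw [← hmp.lintegral_comp_emb (MeasurableEquiv.measurableEmbedding _)]
    have h1 : ∀ a : ℝ × (Fin n → ℝ), ∏ i : Fin (n+1),
        f i ((MeasurableEquiv.piFinSuccAbove (fun _ : Fin (n+1) => ℝ) 0).symm a i)
        = f 0 a.1 * ∏ i : Fin n, f i.succ (a.2 i) := by
      intro a
      simp_rw [MeasurableEquiv.piFinSuccAbove_symm_apply, Fin.insertNthEquiv,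
        Equiv.coe_fn_mk, Fin.insertNth_zero, Fin.prod_univ_succ, Fin.cons_zero, Fin.cons_succ,
        cast_eq]
    simp_rw [h1]
    have h2 := lintegral_prod_mul (μ := (volume : Measure ℝ))
      (ν := Measure.pi fun _ : Fin n => (volume : Measure ℝ)) (f := f 0)
      (g := fun y : Fin n → ℝ => ∏ i : Fin n, f i.succ (y i)) (hf 0).aemeasurable
      (Measurable.aemeasurable (by measurability))
    rw [h2, ih (fun i => f i.succ) (fun i => hf _), Fin.prod_univ_succ]

private lemma pi_gaussian_eq (k : ℕ) :
    (Measure.pi fun _ : Fin k => gaussianReal 0 1) =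
      (Measure.pi fun _ : Fin k => (volume : Measure ℝ)).withDensity
        (fun x => ∏ i, gaussianPDF 0 1 (x i)) := by
  refine Measure.pi_eq fun s hs => ?_
  rw [withDensity_apply _ (MeasurableSet.univ_pi hs),
    ← lintegral_indicator (MeasurableSet.univ_pi hs)]
  have h1 : ∀ x : Fin k → ℝ, (univ.pi s).indicator (fun x => ∏ i, gaussianPDF 0 1 (x i)) x
      = ∏ i, (s i).indicator (gaussianPDF 0 1) (x i) := by
    intro x
    by_cases hx : x ∈ univ.pi s
    · rw [indicator_of_mem hx]
      exact Finset.prod_congr rfl fun i _ => (indicator_of_mem (hx i (mem_univ i)) _).symm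
    · rw [indicator_of_notMem hx]
      rw [mem_univ_pi, not_forall] at hx
      obtain ⟨i, hi⟩ := hx
      exact (Finset.prod_eq_zero (Finset.mem_univ i)
        (by rw [indicator_of_notMem hi])).symm
  simp_rw [h1]
  rw [lintegral_pi_prod _ (fun i => (measurable_gaussianPDF 0 1).indicator (hs i))]
  exact Finset.prod_congr rfl fun i _ => by
    rw [lintegral_indicator (hs i), gaussianReal_apply 0 one_ne_zero]


open scoped Real in
private lemma const_id (k : ℕ) (hk : 1 ≤ k) :
    (k : ℝ) * (Real.sqrt π ^ k / Real.Gamma ((k : ℝ) / 2 + 1)) * ((Real.sqrt (2 * π))⁻¹) ^ k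
      = (Real.Gamma ((k : ℝ) / 2) * (2 : ℝ) ^ (((k : ℝ) - 2) / 2))⁻¹ := by
  have hk0 : (0 : ℝ) < k := by exact_mod_cast hk
  have hG : 0 < Real.Gamma ((k : ℝ) / 2) := Real.Gamma_pos_of_pos (by positivity)
  have h1 : Real.Gamma ((k : ℝ) / 2 + 1) = ((k : ℝ) / 2) * Real.Gamma ((k : ℝ) / 2) :=
    Real.Gamma_add_one (by positivity)
  have h2 : Real.sqrt (2 * π) = Real.sqrt 2 * Real.sqrt π := Real.sqrt_mul (by norm_num) π
  have h3 : (2 : ℝ) ^ (((k : ℝ) - 2) / 2) = Real.sqrt 2 ^ k / 2 := by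
    have : ((k : ℝ) - 2) / 2 = (1 / 2 : ℝ) * (k : ℕ) - 1 := by push_cast; ring
    rw [this, Real.rpow_sub (by norm_num), Real.rpow_one,
      show ((1:ℝ)/2 * (k:ℝ)) = ((1:ℝ)/2) * ((k:ℕ):ℝ) by norm_num,
      Real.rpow_mul (by norm_num) _ ((k:ℕ):ℝ), Real.rpow_natCast,
      show ((2:ℝ) ^ ((1:ℝ)/2)) = Real.sqrt 2 by rw [Real.sqrt_eq_rpow]]
  have hs2 : (0:ℝ) < Real.sqrt 2 := Real.sqrt_pos.2 (by norm_num)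
  have hsπ : (0:ℝ) < Real.sqrt π := Real.sqrt_pos.2 Real.pi_pos
  rw [h1, h2, h3, mul_inv, mul_pow]
  field_simp
  simp only [div_pow, one_pow]
  field_simp

open scoped Real in
private lemma measure_norm_ge (k : ℕ) (hk : 1 ≤ k) (t : ℝ) (ht : 0 ≤ t) :
    ((Measure.pi fun _ : Fin k => gaussianReal 0 1)
        {x | Real.sqrt (∑ i, x i ^ 2) ≥ t}).toReal
      = ∫ r in Ioi (0:ℝ), (Ici t).indicator (chiDensity k) r := by
  haveI : Nonempty (Fin k) := ⟨⟨0, hk⟩⟩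
  set S : Set (Fin k → ℝ) := {x | Real.sqrt (∑ i, x i ^ 2) ≥ t} with hS
  have hcont : Continuous fun x : Fin k → ℝ => Real.sqrt (∑ i, x i ^ 2) :=
    (continuous_finset_sum _ fun i _ => (continuous_apply i).pow 2).sqrt
  have hSmeas : MeasurableSet S := hcont.measurable measurableSet_Ici
  have hnn : ∀ x : Fin k → ℝ, 0 ≤ ∏ i, gaussianPDFReal 0 1 (x i) :=
    fun x => Finset.prod_nonneg fun i _ => gaussianPDFReal_nonneg 0 1 (x i)
  have hInt : Integrable (fun x : Fin k → ℝ => ∏ i, gaussianPDFReal 0 1 (x i)) := by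
    exact Integrable.fintype_prod (𝕜 := ℝ) (E := ℝ) (ι := Fin k)
      (f := fun _ => gaussianPDFReal 0 1) fun _ => integrable_gaussianPDFReal 0 1
  have step1 : ((Measure.pi fun _ : Fin k => gaussianReal 0 1) S).toReal
      = ∫ x : Fin k → ℝ, S.indicator (fun x => ∏ i, gaussianPDFReal 0 1 (x i)) x := by
    rw [pi_gaussian_eq, withDensity_apply _ hSmeas]
    have : ∀ x : Fin k → ℝ, (∏ i, gaussianPDF 0 1 (x i))
        = ENNReal.ofReal (∏ i, gaussianPDFReal 0 1 (x i)) := by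
      intro x
      rw [ENNReal.ofReal_prod_of_nonneg fun i _ => gaussianPDFReal_nonneg 0 1 (x i)]
      rfl
    simp_rw [this]
    have hIntS : Integrable (fun x : Fin k → ℝ => ∏ i, gaussianPDFReal 0 1 (x i))
        ((Measure.pi fun _ : Fin k => (volume : Measure ℝ)).restrict S) := by
      rw [← volume_pi]; exact hInt.restrict
    rw [← ofReal_integral_eq_lintegral_ofReal hIntS
      (Filter.Eventually.of_forall fun x => hnn x),
      ENNReal.toReal_ofReal (setIntegral_nonneg hSmeas fun x _ => hnn x),
      ← integral_indicator hSmeas, ← volume_pi]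
  rw [step1]
  set c : ℝ := (Real.sqrt (2 * π))⁻¹ with hc
  set f : ℝ → ℝ := fun r => (Ici t).indicator (fun r => c ^ k * Real.exp (-r ^ 2 / 2)) r with hf
  set e := (MeasurableEquiv.toLp 2 (Fin k → ℝ)).symm with he
  have step2 : ∫ x : Fin k → ℝ, S.indicator (fun x => ∏ i, gaussianPDFReal 0 1 (x i)) x
      = ∫ y : EuclideanSpace ℝ (Fin k), f ‖y‖ := by
    rw [← (EuclideanSpace.volume_preserving_symm_measurableEquiv_toLp (Fin k)).integral_comp
      (MeasurableEquiv.measurableEmbedding _)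
      (fun x => S.indicator (fun x => ∏ i, gaussianPDFReal 0 1 (x i)) x)]
    refine integral_congr_ae (Filter.Eventually.of_forall fun y => ?_)
    have hey : ∀ i, e y i = y i := fun i => rfl
    have hnorm : Real.sqrt (∑ i, e y i ^ 2) = ‖y‖ := by
      rw [EuclideanSpace.norm_eq]
      simp [sq_abs, hey]
    have hnormsq : ‖y‖ ^ 2 = ∑ i, y i ^ 2 := by
      rw [← hnorm, Real.sq_sqrt (Finset.sum_nonneg fun i _ => sq_nonneg _)]
      simp [hey]
    have hprod : ∏ i, gaussianPDFReal 0 1 (e y i) = c ^ k * Real.exp (-‖y‖ ^ 2 / 2) := by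
      have h1 : ∀ i : Fin k, gaussianPDFReal 0 1 (e y i) = c * Real.exp (-(y i) ^ 2 / 2) := by
        intro i
        rw [gaussianPDFReal, hey i, hc]
        norm_num
      simp_rw [h1]
      rw [Finset.prod_mul_distrib, Finset.prod_const, ← Real.exp_sum, Finset.card_univ,
        Fintype.card_fin]
      congr 1
      rw [hnormsq]
      simp [neg_div, Finset.sum_div]
    show S.indicator (fun x => ∏ i, gaussianPDFReal 0 1 (x i)) (e y)
      = (Ici t).indicator (fun r => c ^ k * Real.exp (-r ^ 2 / 2)) ‖y‖
    by_cases hyt : t ≤ ‖y‖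
    · have hmem : e y ∈ S := by
        simp only [hS, mem_setOf_eq, ge_iff_le, hnorm]
        exact hyt
      rw [indicator_of_mem (show ‖y‖ ∈ Ici t from hyt), indicator_of_mem hmem, hprod]
    · have hmem : e y ∉ S := by
        simp only [hS, mem_setOf_eq, ge_iff_le, hnorm]
        exact hyt
      rw [indicator_of_notMem (show ‖y‖ ∉ Ici t from hyt), indicator_of_notMem hmem]
  rw [step2]
  have hball : ((volume : Measure (EuclideanSpace ℝ (Fin k)))
      (Metric.ball 0 1)).toReal = Real.sqrt π ^ k / Real.Gamma ((k : ℝ) / 2 + 1) := by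
    rw [EuclideanSpace.volume_ball]
    simp only [Fintype.card_fin, ENNReal.ofReal_one, one_pow, one_mul]
    exact ENNReal.toReal_ofReal (by positivity)
  rw [integral_fun_norm_addHaar (volume : Measure (EuclideanSpace ℝ (Fin k))) f]
  simp only [finrank_euclideanSpace, Fintype.card_fin, nsmul_eq_mul, smul_eq_mul, measureReal_def, hball]
  rw [← mul_assoc, ← integral_const_mul]
  refine integral_congr_ae (Filter.Eventually.of_forall fun r => ?_)
  by_cases hrt : r ∈ Ici t
  · simp only [hf, hc, indicator_of_mem hrt, chiDensity]
    rw [div_eq_mul_inv _ (Real.Gamma ((k:ℝ)/2) * (2:ℝ) ^ (((k:ℝ)-2)/2)), ← const_id k hk]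
    ring
  · simp only [hf, indicator_of_notMem hrt, mul_zero]

private lemma chi_integrable (k : ℕ) : Integrable (chiDensity k) := by
  have h0 := integrable_rpow_mul_exp_neg_mul_sq (b := (1/2:ℝ)) (by norm_num)
    (s := ((k - 1 : ℕ) : ℝ)) (lt_of_lt_of_le (by norm_num) (Nat.cast_nonneg _))
  have heq : ∀ x : ℝ, x ^ ((k - 1 : ℕ) : ℝ) * Real.exp (-(1/2) * x ^ 2)
      = x ^ (k - 1) * Real.exp (-x ^ 2 / 2) := by
    intro x
    rw [Real.rpow_natCast]
    congr 1
    ring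
  have h1 : Integrable (fun x : ℝ => x ^ (k - 1) * Real.exp (-x ^ 2 / 2)) := by
    refine h0.congr (Filter.Eventually.of_forall fun x => heq x)
  exact h1.div_const _

private lemma ioc_ae_eq (a u : ℝ) (ha : 0 ≤ a) :
    (Ico a u ∩ Ioi 0 : Set ℝ) =ᵐ[volume] (Ioc a u : Set ℝ) := by
  refine MeasureTheory.ae_eq_set.mpr ⟨?_, ?_⟩
  · refine measure_mono_null (fun x hx => ?_) (Real.volume_singleton (a := a))
    obtain ⟨⟨⟨hax, hxu⟩, _⟩, hnot⟩ := hx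
    by_cases hax' : a < x
    · exact absurd ⟨hax', hxu.le⟩ hnot
    · exact mem_singleton_iff.2 (le_antisymm (not_lt.1 hax') hax)
  · refine measure_mono_null (fun x hx => ?_) (Real.volume_singleton (a := u))
    obtain ⟨⟨hax, hxu⟩, hnot⟩ := hx
    by_cases hxu' : x < u
    · exact absurd ⟨⟨hax.le, hxu'⟩, lt_of_le_of_lt ha hax⟩ hnot
    · exact mem_singleton_iff.2 (le_antisymm hxu (not_lt.1 hxu'))

private lemma F_split (k : ℕ) (u ρ : ℝ) (hu : 0 < u) (hρ₀ : 0 ≤ ρ) (hρu : ρ ≤ u) :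
    ∫ r in Ioi (0:ℝ), (Ici (u - ρ)).indicator (chiDensity k) r
      = (∫ r in Ioi (0:ℝ), (Ici u).indicator (chiDensity k) r)
        + ∫ r in Ioc (u - ρ) u, chiDensity k r := by
  have hpt : ∀ r : ℝ, (Ici (u-ρ)).indicator (chiDensity k) r
      = (Ici u).indicator (chiDensity k) r + (Ico (u-ρ) u).indicator (chiDensity k) r := by
    intro r
    by_cases h1 : u ≤ r
    · rw [indicator_of_mem (show r ∈ Ici (u-ρ) from le_trans (by linarith) h1),
        indicator_of_mem (show r ∈ Ici u from h1),
        indicator_of_notMem (show r ∉ Ico (u-ρ) u from fun h => absurd h.2 (not_lt.2 h1))]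
      ring
    · by_cases h2 : u - ρ ≤ r
      · rw [indicator_of_mem (show r ∈ Ici (u-ρ) from h2),
          indicator_of_notMem (show r ∉ Ici u from h1),
          indicator_of_mem (show r ∈ Ico (u-ρ) u from ⟨h2, not_le.1 h1⟩)]
        ring
      · rw [indicator_of_notMem (show r ∉ Ici (u-ρ) from h2),
          indicator_of_notMem (show r ∉ Ici u from h1),
          indicator_of_notMem (show r ∉ Ico (u-ρ) u from fun h => absurd h.1 h2)]
        ring
  rw [integral_congr_ae (Filter.Eventually.of_forall hpt),
    integral_add ((chi_integrable k).restrict.indicator measurableSet_Ici)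
      ((chi_integrable k).restrict.indicator measurableSet_Ico)]
  congr 1
  rw [integral_indicator measurableSet_Ico, Measure.restrict_restrict measurableSet_Ico]
  exact setIntegral_congr_set (ioc_ae_eq (u - ρ) u (by linarith))

private lemma iteratedDeriv_ofReal_comp {p : ℝ → ℝ} {g : ℂ → ℂ} (hg : Differentiable ℂ g)
    (h : ∀ x : ℝ, (p x : ℂ) = g x) : ∀ (j : ℕ) (x : ℝ),
    ((iteratedDeriv j p x : ℝ) : ℂ) = iteratedDeriv j g x := by
  intro j
  induction j with
  | zero => intro x; simpa using h x
  | succ j ih =>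
    intro x
    have hG : Differentiable ℂ (iteratedDeriv j g) :=
      (hg.contDiff (n := (j + 1 : ℕ))).differentiable_iteratedDeriv j
        (by exact_mod_cast lt_add_one j)
    have hq : iteratedDeriv j p = fun y : ℝ => (iteratedDeriv j g y).re := by
      funext y
      simpa using congrArg Complex.re (ih y)
    have hd : HasDerivAt (fun y : ℝ => iteratedDeriv j g ↑y)
        (deriv (iteratedDeriv j g) x) x := ((hG x).hasDerivAt).comp_ofReal
    have him : (deriv (iteratedDeriv j g) x).im = 0 := by
      have h1 : HasDerivAt (fun y : ℝ => (iteratedDeriv j g ↑y).im)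
          ((deriv (iteratedDeriv j g) x).im) x := by
        exact (Complex.imCLM.hasFDerivAt.comp_hasDerivAt x hd)
      have h2 : (fun y : ℝ => (iteratedDeriv j g ↑y).im) = fun _ => 0 := by
        funext y; rw [← ih y]; simp
      rw [h2] at h1
      exact h1.unique (hasDerivAt_const x 0)
    have hre : HasDerivAt (iteratedDeriv j p) ((deriv (iteratedDeriv j g) x).re) x := by
      rw [hq]; exact (hG x).hasDerivAt.real_of_complex
    rw [iteratedDeriv_succ, iteratedDeriv_succ, hre.deriv]
    exact Complex.ext (by simp) (by simp [him])

noncomputable def gC (k : ℕ) : ℂ → ℂ := fun z =>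
  z ^ (k - 1) * Complex.exp (-z ^ 2 / 2) /
    ((Real.Gamma ((k : ℝ) / 2) * (2 : ℝ) ^ (((k : ℝ) - 2) / 2) : ℝ) : ℂ)

private lemma gC_diff (k : ℕ) : Differentiable ℂ (gC k) :=
  ((differentiable_pow (k - 1)).mul
    (((differentiable_pow 2).neg.div_const 2).cexp)).div_const _

private lemma gC_coe (k : ℕ) (x : ℝ) : ((chiDensity k x : ℝ) : ℂ) = gC k x := by
  rw [chiDensity, gC]
  push_cast [Complex.ofReal_exp]
  norm_num

private lemma chi_hasSum (k : ℕ) (u r : ℝ) :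
    HasSum (fun j : ℕ => iteratedDeriv j (chiDensity k) u / j.factorial * (r - u) ^ j)
      (chiDensity k r) := by
  have hiter := iteratedDeriv_ofReal_comp (gC_diff k) (gC_coe k)
  have H := (Complex.hasSum_taylorSeries_of_entire (gC_diff k) (u : ℂ) (r : ℂ)).mapL
    Complex.reCLM
  have hterm : (fun n : ℕ => Complex.reCLM
      ((n.factorial : ℂ)⁻¹ • ((r : ℂ) - (u : ℂ)) ^ n • iteratedDeriv n (gC k) (u : ℂ)))
      = fun n : ℕ => iteratedDeriv n (chiDensity k) u / n.factorial * (r - u) ^ n := by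
    funext n
    have : ((n.factorial : ℂ)⁻¹ • ((r : ℂ) - (u : ℂ)) ^ n • iteratedDeriv n (gC k) (u : ℂ))
        = ((iteratedDeriv n (chiDensity k) u / n.factorial * (r - u) ^ n : ℝ) : ℂ) := by
      rw [← hiter n u]
      push_cast [smul_eq_mul]
      ring
    rw [this, Complex.reCLM_apply, Complex.ofReal_re]
  have hsum : Complex.reCLM (gC k (r : ℂ)) = chiDensity k r := by
    rw [← gC_coe k r, Complex.reCLM_apply, Complex.ofReal_re]
  rw [hterm, hsum] at H
  exact H

private lemma chi_taylor_summable (k : ℕ) (u ρ : ℝ) (hρ₀ : 0 ≤ ρ) :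
    Summable (fun j : ℕ => |iteratedDeriv j (chiDensity k) u| / j.factorial * ρ ^ j) := by
  have H := chi_hasSum k u (u + (ρ + 1))
  have hr : u + (ρ + 1) - u = ρ + 1 := by ring
  rw [hr] at H
  have htend : Filter.Tendsto
      (fun j : ℕ => |iteratedDeriv j (chiDensity k) u / j.factorial * (ρ + 1) ^ j|)
      Filter.atTop (nhds |0|) := H.summable.tendsto_atTop_zero.abs
  obtain ⟨M, hM⟩ := htend.bddAbove_range
  have hM' : ∀ j : ℕ, |iteratedDeriv j (chiDensity k) u| / j.factorial * (ρ + 1) ^ j ≤ M := by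
    intro j
    have h1 := hM (Set.mem_range_self j)
    rwa [abs_mul, abs_div, Nat.abs_cast, abs_pow, abs_of_nonneg (by linarith : (0:ℝ) ≤ ρ + 1)]
      at h1
  have hq0 : (0:ℝ) ≤ ρ / (ρ + 1) := by positivity
  have hq1 : ρ / (ρ + 1) < 1 := by
    rw [div_lt_one (by linarith)]; linarith
  refine Summable.of_nonneg_of_le (fun j => by positivity) (fun j => ?_)
    ((summable_geometric_of_lt_one hq0 hq1).mul_left M)
  have hqpow : (ρ + 1) ^ j * (ρ / (ρ + 1)) ^ j = ρ ^ j := by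
    rw [← mul_pow]
    congr 1
    field_simp
  calc |iteratedDeriv j (chiDensity k) u| / j.factorial * ρ ^ j
      = (|iteratedDeriv j (chiDensity k) u| / j.factorial * (ρ + 1) ^ j)
        * (ρ / (ρ + 1)) ^ j := by rw [mul_assoc, hqpow]
    _ ≤ M * (ρ / (ρ + 1)) ^ j := by
        have := hM' j
        have h2 : (0:ℝ) ≤ (ρ / (ρ + 1)) ^ j := by positivity
        nlinarith [hM' j]

private lemma chi_term_integral (k : ℕ) (u ρ : ℝ) (hρ₀ : 0 ≤ ρ) (j : ℕ) :
    ∫ r in Ioc (u - ρ) u, (iteratedDeriv j (chiDensity k) u / j.factorial * (r - u) ^ j)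
      = ρ ^ (j + 1) / (Nat.factorial (j + 1) : ℝ)
        * ((-1 : ℝ) ^ j * iteratedDeriv j (chiDensity k) u) := by
  rw [← intervalIntegral.integral_of_le (by linarith : u - ρ ≤ u),
    intervalIntegral.integral_const_mul]
  have hpow : ∫ x in (u - ρ)..u, (x - u) ^ j = (-1 : ℝ) ^ j * ρ ^ (j + 1) / (j + 1) := by
    rw [intervalIntegral.integral_comp_sub_right (fun x => x ^ j) u,
      integral_pow, show u - u = 0 by ring, show u - ρ - u = -ρ by ring,
      zero_pow (Nat.succ_ne_zero j), neg_pow, pow_succ (-1 : ℝ) j]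
    ring
  rw [hpow, Nat.factorial_succ]
  have h1 : (Nat.factorial j : ℝ) ≠ 0 := Nat.cast_ne_zero.2 (Nat.factorial_ne_zero j)
  have h2 : ((j:ℝ) + 1) ≠ 0 := by positivity
  push_cast
  field_simp

private lemma chi_integral_eq_tsum (k : ℕ) (u ρ : ℝ) (hρ₀ : 0 ≤ ρ) :
    ∫ r in Ioc (u - ρ) u, chiDensity k r
      = ∑' j : ℕ, ρ ^ (j + 1) / (Nat.factorial (j + 1) : ℝ)
          * ((-1 : ℝ) ^ j * iteratedDeriv j (chiDensity k) u) := by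
  set a : ℕ → ℝ := fun j => iteratedDeriv j (chiDensity k) u with ha
  have hmeas : ∀ j : ℕ, AEStronglyMeasurable
      (fun r : ℝ => a j / j.factorial * (r - u) ^ j)
      (volume.restrict (Ioc (u - ρ) u)) := by
    intro j
    exact (Continuous.aestronglyMeasurable (by fun_prop))
  have hne : ∑' j : ℕ, ∫⁻ r in Ioc (u - ρ) u, ‖a j / j.factorial * (r - u) ^ j‖₊ ≠ ⊤ := by
    have hb : ∀ j : ℕ, ∫⁻ r in Ioc (u - ρ) u, ‖a j / j.factorial * (r - u) ^ j‖₊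
        ≤ ENNReal.ofReal (|a j| / j.factorial * ρ ^ j) * ENNReal.ofReal ρ := by
      intro j
      have hptw : ∀ r ∈ Ioc (u - ρ) u, (‖a j / j.factorial * (r - u) ^ j‖₊ : ENNReal)
          ≤ ENNReal.ofReal (|a j| / j.factorial * ρ ^ j) := by
        intro r hr
        rw [← enorm_eq_nnnorm, ← ofReal_norm]
        apply ENNReal.ofReal_le_ofReal
        rw [Real.norm_eq_abs, abs_mul, abs_div, Nat.abs_cast, abs_pow]
        have hru : |r - u| ≤ ρ := abs_le.mpr ⟨by linarith [hr.1], by linarith [hr.2]⟩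
        gcongr
      calc ∫⁻ r in Ioc (u - ρ) u, ‖a j / j.factorial * (r - u) ^ j‖₊
          ≤ ∫⁻ _ in Ioc (u - ρ) u, ENNReal.ofReal (|a j| / j.factorial * ρ ^ j) :=
            setLIntegral_mono measurable_const hptw
        _ = ENNReal.ofReal (|a j| / j.factorial * ρ ^ j) * ENNReal.ofReal ρ := by
            rw [setLIntegral_const, Real.volume_Ioc, show u - (u - ρ) = ρ by ring]
    refine ne_top_of_le_ne_top ?_ (ENNReal.tsum_le_tsum hb)
    rw [ENNReal.tsum_mul_right]
    exact ENNReal.mul_ne_top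
      (by rw [← ENNReal.ofReal_tsum_of_nonneg (fun j => by positivity)
          (chi_taylor_summable k u ρ hρ₀)]; exact ENNReal.ofReal_ne_top)
      ENNReal.ofReal_ne_top
  have hswap := MeasureTheory.integral_tsum hmeas hne
  have hpt : ∀ r : ℝ, ∑' j : ℕ, a j / j.factorial * (r - u) ^ j = chiDensity k r :=
    fun r => (chi_hasSum k u r).tsum_eq
  calc ∫ r in Ioc (u - ρ) u, chiDensity k r
      = ∫ r in Ioc (u - ρ) u, ∑' j : ℕ, a j / j.factorial * (r - u) ^ j := by
        refine integral_congr_ae (Filter.Eventually.of_forall fun r => (hpt r).symm)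
    _ = ∑' j : ℕ, ∫ r in Ioc (u - ρ) u, a j / j.factorial * (r - u) ^ j := hswap
    _ = _ := tsum_congr fun j => chi_term_integral k u ρ hρ₀ j

/-- for `k ≥ 1`, `u > 0`, `0 ≤ ρ ≤ u`, and `X` a vector of `k` i.i.d. standard
Gaussians, `P(‖X‖ ≥ u − ρ) = P(‖X‖ ≥ u) + Σ_{j=1}^∞ (ρ^j/j!) (-1)^{j-1} p_k^{(j-1)}(u)`,
the series converging absolutely. -/
theorem gaussian_tube_norm (k : ℕ) (hk : 1 ≤ k) (u ρ : ℝ) (hu : 0 < u)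
    (hρ₀ : 0 ≤ ρ) (hρu : ρ ≤ u) :
    Summable (fun j : ℕ =>
      |ρ ^ (j + 1) / (Nat.factorial (j + 1) : ℝ) *
        ((-1 : ℝ) ^ j * iteratedDeriv j (chiDensity k) u)|) ∧
    ((Measure.pi fun _ : Fin k => gaussianReal 0 1)
        {x | Real.sqrt (∑ i, x i ^ 2) ≥ u - ρ}).toReal =
      ((Measure.pi fun _ : Fin k => gaussianReal 0 1)
          {x | Real.sqrt (∑ i, x i ^ 2) ≥ u}).toReal +
        ∑' j : ℕ, ρ ^ (j + 1) / (Nat.factorial (j + 1) : ℝ) *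
          ((-1 : ℝ) ^ j * iteratedDeriv j (chiDensity k) u) := by
  constructor
  · refine Summable.of_nonneg_of_le (fun j => abs_nonneg _) (fun j => ?_)
      ((chi_taylor_summable k u ρ hρ₀).mul_left ρ)
    have h1 : |ρ ^ (j + 1) / (Nat.factorial (j + 1) : ℝ)
        * ((-1 : ℝ) ^ j * iteratedDeriv j (chiDensity k) u)|
        = ρ ^ (j + 1) / (Nat.factorial (j + 1) : ℝ) * |iteratedDeriv j (chiDensity k) u| := by
      rw [abs_mul, abs_mul, abs_pow, abs_neg, abs_one, one_pow, one_mul, abs_div,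
        abs_pow, abs_of_nonneg hρ₀, Nat.abs_cast]
    rw [h1]
    have hfacle : (Nat.factorial j : ℝ) ≤ (Nat.factorial (j + 1) : ℝ) :=
      Nat.cast_le.2 (Nat.factorial_le (Nat.le_succ j))
    have hfac0 : (0:ℝ) < (Nat.factorial j : ℝ) := by exact_mod_cast Nat.factorial_pos j
    calc ρ ^ (j + 1) / (Nat.factorial (j + 1) : ℝ) * |iteratedDeriv j (chiDensity k) u|
        ≤ ρ ^ (j + 1) / (Nat.factorial j : ℝ) * |iteratedDeriv j (chiDensity k) u| := by
          gcongr
        _ = ρ * (|iteratedDeriv j (chiDensity k) u| / (Nat.factorial j : ℝ) * ρ ^ j) := by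
          rw [pow_succ]
          ring
  · rw [measure_norm_ge k hk (u - ρ) (by linarith), measure_norm_ge k hk u hu.le,
      F_split k u ρ hu hρ₀ hρu, chi_integral_eq_tsum k u ρ hρ₀]
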